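/- Let f be Lipschitz on X and suppose M_max(f) consists of a unique measure μ_∞. Then either μ_∞ is supported on a single periodic orbit, or the support of μ_∞ contains no periodic points. -/

import Mathlib

open MeasureTheory Filter Real Topology
open scoped ENNReal

noncomputable section

abbrev X (d : ℕ) : Type := ℕ → Fin d

def shift {d : ℕ} (x : X d) : X d := fun n => x (n + 1)

def birkhoff {d : ℕ} (f : X d → ℝ) (n : ℕ) (x : X d) : ℝ :=
  ∑ i ∈ Finset.range n, f (shift^[i] x)

def IsPeriodic {d : ℕ} (x : X d) : Prop := ∃ n, 0 < n ∧ shift^[n] x = x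

def minPer {d : ℕ} (x : X d) : ℕ := Function.minimalPeriod shift x

def beta {d : ℕ} (f : X d → ℝ) : ℝ :=
  sSup {r : ℝ | ∃ μ : Measure (X d), IsProbabilityMeasure μ ∧ μ.map shift = μ ∧ r = ∫ x, f x ∂μ}

def Ifun {d : ℕ} (f : X d → ℝ) (x : X d) : ℝ :=
  (minPer x : ℝ) * beta f - birkhoff f (minPer x) x

def dtheta {d : ℕ} (θ : ℝ) (x y : X d) : ℝ :=
  letI : Decidable (x = y) := Classical.dec _
  if h : x = y then 0 else θ ^ Nat.find (Function.ne_iff.mp h)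

def LipWrt {d : ℕ} (θ C : ℝ) (f : X d → ℝ) : Prop :=
  ∀ x y, |f x - f y| ≤ C * dtheta θ x y

def periodize {d : ℕ} (n : ℕ) (w : Fin (n + 1) → Fin d) : X d :=
  fun i => w ⟨i % (n + 1), Nat.mod_lt i (Nat.succ_pos n)⟩

def pressure {d : ℕ} (g : X d → ℝ) : ℝ :=
  Filter.limsup (fun n : ℕ =>
    Real.log (∑ w : Fin (n + 1) → Fin d, Real.exp (birkhoff g (n + 1) (periodize n w))) / ((n : ℝ) + 1))
    Filter.atTop

def zetaVal {d : ℕ} (f : X d → ℝ) (c s : ℝ) (k : X d → ℝ) : ℝ :=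
  ∑' n : ℕ, ∑ w : Fin (n + 1) → Fin d,
    Real.exp (c * s * birkhoff f (n + 1) (periodize n w) - ((n : ℝ) + 1) * pressure (fun y => c * f y))
      * (birkhoff k (n + 1) (periodize n w) / ((n : ℝ) + 1))

def etaVal {d : ℕ} (f : X d → ℝ) (c : ℝ) (N : ℕ) (k : X d → ℝ) : ℝ :=
  ∑ n ∈ Finset.range N, ∑ w : Fin (n + 1) → Fin d,
    Real.exp (c * birkhoff f (n + 1) (periodize n w)) * (birkhoff k (n + 1) (periodize n w) / ((n : ℝ) + 1))

def piVal {d : ℕ} (f : X d → ℝ) (c : ℝ) (N : ℕ) (k : X d → ℝ) : ℝ :=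
  ∑ n ∈ Finset.range N, ∑ w : Fin (n + 1) → Fin d,
    Real.exp (c * birkhoff f (n + 1) (periodize n w) - ((n : ℝ) + 1) * pressure (fun y => c * f y))
      * (birkhoff k (n + 1) (periodize n w) / ((n : ℝ) + 1))

def cylSet {d : ℕ} (m : ℕ) (w : Fin m → Fin d) : Set (X d) :=
  {x : X d | ∀ i : Fin m, x i = w i}

def Itilde {d : ℕ} (θ : ℝ) (f : X d → ℝ) (x : X d) : EReal :=
  ⨆ ε : {e : ℝ // 0 < e},
    sInf {r : EReal | ∃ y : X d, IsPeriodic y ∧ dtheta θ x y ≤ ε.1 ∧ r = ((Ifun f y : ℝ) : EReal)}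

def orbitMeasure {d : ℕ} (x : X d) : Measure (X d) :=
  ((minPer x : ℝ≥0∞))⁻¹ • ∑ i ∈ Finset.range (minPer x), Measure.dirac (shift^[i] x)

section aux
variable {d : ℕ}

lemma shift_iter_apply (x : X d) (n i : ℕ) : (shift^[n] x) i = x (n + i) := by
  induction n generalizing x with
  | zero => simp
  | succ n ih =>
    rw [Function.iterate_succ_apply, ih]
    show x (n + i + 1) = x (n + 1 + i)
    congr 1; omega

lemma shift_continuous : Continuous (shift : X d → X d) :=
  continuous_pi fun n => continuous_apply (n + 1)

lemma shift_measurable : Measurable (shift : X d → X d) :=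
  measurable_pi_lambda _ fun n => measurable_pi_apply (n + 1)

lemma dtheta_nonneg {θ : ℝ} (hθ0 : 0 ≤ θ) (x y : X d) : 0 ≤ dtheta θ x y := by
  unfold dtheta
  split_ifs
  · exact le_refl 0
  · positivity

lemma dtheta_le_pow {θ : ℝ} (hθ0 : 0 < θ) (hθ1 : θ ≤ 1) {x y : X d} {k : ℕ}
    (h : ∀ i, i < k → x i = y i) : dtheta θ x y ≤ θ ^ k := by
  unfold dtheta
  split_ifs with hxy
  · positivity
  · apply pow_le_pow_of_le_one (le_of_lt hθ0) hθ1
    rw [Nat.le_find_iff]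
    intro m hm hne
    exact hne (h m hm)

lemma sum_tail_le {θ : ℝ} (hθ0 : 0 < θ) (hθ1 : θ < 1) (n : ℕ) :
    ∑ i ∈ Finset.range n, θ ^ (n - i) ≤ θ / (1 - θ) := by
  have h1 : ∑ i ∈ Finset.range n, θ ^ (n - i) = ∑ j ∈ Finset.range n, θ ^ (j + 1) := by
    calc ∑ i ∈ Finset.range n, θ ^ (n - i)
        = ∑ i ∈ Finset.range n, θ ^ ((n - 1 - i) + 1) := by
          apply Finset.sum_congr rfl
          intro i hi
          rw [Finset.mem_range] at hi
          congr 1; omega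
      _ = ∑ j ∈ Finset.range n, θ ^ (j + 1) := Finset.sum_range_reflect (fun j => θ ^ (j + 1)) n
  rw [h1]
  have h2 : ∑ j ∈ Finset.range n, θ ^ (j + 1) = θ * ∑ j ∈ Finset.range n, θ ^ j := by
    rw [Finset.mul_sum]
    apply Finset.sum_congr rfl
    intro i _; ring
  rw [h2]
  have hg : ∑ j ∈ Finset.range n, θ ^ j ≤ 1 / (1 - θ) := by
    rw [geom_sum_eq (ne_of_lt hθ1)]
    have hpos : 0 < 1 - θ := by linarith
    have he : (θ ^ n - 1) / (θ - 1) = (1 - θ ^ n) / (1 - θ) := by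
      rw [div_eq_div_iff (by intro h; linarith [sub_eq_zero.mp h] : θ - 1 ≠ 0) (ne_of_gt hpos)]; ring
    rw [he, div_le_div_iff₀ hpos hpos]
    have : (0:ℝ) ≤ θ ^ n := by positivity
    nlinarith
  calc θ * ∑ j ∈ Finset.range n, θ ^ j ≤ θ * (1 / (1 - θ)) :=
        mul_le_mul_of_nonneg_left hg (le_of_lt hθ0)
    _ = θ / (1 - θ) := by ring

lemma birkhoff_close {θ C : ℝ} (hθ0 : 0 < θ) (hθ1 : θ < 1) {f : X d → ℝ}
    (hf : LipWrt θ C f) (hC : 0 ≤ C) {a b : X d} {n k : ℕ}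
    (h : ∀ i, i < n + k → a i = b i) :
    |birkhoff f n a - birkhoff f n b| ≤ C * (θ / (1 - θ)) * θ ^ k := by
  have key : ∀ i ∈ Finset.range n,
      |f (shift^[i] a) - f (shift^[i] b)| ≤ C * θ ^ k * θ ^ (n - i) := by
    intro i hi
    rw [Finset.mem_range] at hi
    have hd : dtheta θ (shift^[i] a) (shift^[i] b) ≤ θ ^ ((n - i) + k) := by
      apply dtheta_le_pow hθ0 (le_of_lt hθ1)
      intro j hj
      rw [shift_iter_apply, shift_iter_apply]
      exact h (i + j) (by omega)
    calc |f (shift^[i] a) - f (shift^[i] b)| ≤ C * dtheta θ (shift^[i] a) (shift^[i] b) := hf _ _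
      _ ≤ C * θ ^ ((n - i) + k) := mul_le_mul_of_nonneg_left hd hC
      _ = C * θ ^ k * θ ^ (n - i) := by rw [pow_add]; ring
  calc |birkhoff f n a - birkhoff f n b|
      = |∑ i ∈ Finset.range n, (f (shift^[i] a) - f (shift^[i] b))| := by
        rw [birkhoff, birkhoff, ← Finset.sum_sub_distrib]
    _ ≤ ∑ i ∈ Finset.range n, |f (shift^[i] a) - f (shift^[i] b)| :=
        Finset.abs_sum_le_sum_abs _ _
    _ ≤ ∑ i ∈ Finset.range n, C * θ ^ k * θ ^ (n - i) := Finset.sum_le_sum key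
    _ = C * θ ^ k * ∑ i ∈ Finset.range n, θ ^ (n - i) := by rw [Finset.mul_sum]
    _ ≤ C * θ ^ k * (θ / (1 - θ)) :=
        mul_le_mul_of_nonneg_left (sum_tail_le hθ0 hθ1 n) (by positivity)
    _ = C * (θ / (1 - θ)) * θ ^ k := by ring

lemma map_finset_sum' {ι : Type*} (s : Finset ι) (μ : ι → Measure (X d))
    {g : X d → X d} (hg : Measurable g) :
    (∑ i ∈ s, μ i).map g = ∑ i ∈ s, (μ i).map g := by
  classical
  induction s using Finset.induction with
  | empty => simp [Measure.map_zero]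
  | insert _ _ hx ih =>
    rw [Finset.sum_insert hx, Finset.sum_insert hx, Measure.map_add _ _ hg, ih]

lemma orbit_isProb {P : X d} {n : ℕ} (hn : 0 < n) :
    IsProbabilityMeasure
      ((n : ℝ≥0∞)⁻¹ • ∑ i ∈ Finset.range n, Measure.dirac (shift^[i] P)) := by
  constructor
  rw [Measure.smul_apply, Measure.finset_sum_apply]
  simp only [Measure.dirac_apply_of_mem (Set.mem_univ _)]
  rw [Finset.sum_const, Finset.card_range, nsmul_eq_mul, mul_one, smul_eq_mul]
  rw [ENNReal.inv_mul_cancel]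
  · exact Nat.cast_ne_zero.mpr hn.ne'
  · exact ENNReal.natCast_ne_top n

lemma orbit_inv {P : X d} {n : ℕ} (hn : 0 < n) (hP : shift^[n] P = P) :
    ((n : ℝ≥0∞)⁻¹ • ∑ i ∈ Finset.range n, Measure.dirac (shift^[i] P)).map shift
      = (n : ℝ≥0∞)⁻¹ • ∑ i ∈ Finset.range n, Measure.dirac (shift^[i] P) := by
  rw [Measure.map_smul]
  congr 1
  rw [map_finset_sum' _ _ shift_measurable]
  have hPP : Function.IsPeriodicPt shift n P := hP
  have h1 : ∀ i ∈ Finset.range n,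
      (Measure.dirac (shift^[i] P)).map shift = Measure.dirac (shift^[(i + 1) % n] P) := by
    intro i _
    rw [Measure.map_dirac' shift_measurable]
    congr 1
    rw [hPP.iterate_mod_apply]
    exact (Function.iterate_succ_apply' shift i P).symm
  rw [Finset.sum_congr rfl h1]
  apply Finset.sum_nbij' (fun i => (i + 1) % n) (fun j => (j + n - 1) % n)
  · intro a ha; rw [Finset.mem_range] at *; exact Nat.mod_lt _ hn
  · intro a ha; rw [Finset.mem_range] at *; exact Nat.mod_lt _ hn
  · intro a ha
    rw [Finset.mem_range] at ha
    have h2 : (a + 1) % n + n - 1 = (a + 1) % n + (n - 1) := by omega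
    rw [h2, Nat.mod_add_mod]
    have h3 : a + 1 + (n - 1) = a + n := by omega
    rw [h3, Nat.add_mod_right, Nat.mod_eq_of_lt ha]
  · intro a ha
    rw [Finset.mem_range] at ha
    rw [Nat.mod_add_mod]
    have h2 : a + n - 1 + 1 = a + n := by omega
    rw [h2, Nat.add_mod_right, Nat.mod_eq_of_lt ha]
  · intro a _; rfl

lemma integrable_of_cont_bound {g : X d → ℝ} (hg : Continuous g) {B : ℝ}
    (hB : ∀ z, |g z| ≤ B) (μ : Measure (X d)) [IsFiniteMeasure μ] : Integrable g μ := by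
  apply Integrable.mono' (integrable_const B) hg.aestronglyMeasurable
  exact Filter.Eventually.of_forall (fun z => by simpa using hB z)

lemma orbit_integral {f : X d → ℝ} (hfc : Continuous f) {B : ℝ} (hB : ∀ z, |f z| ≤ B)
    {P : X d} {n : ℕ} (hn : 0 < n) :
    (∫ y, f y ∂((n : ℝ≥0∞)⁻¹ • ∑ i ∈ Finset.range n, Measure.dirac (shift^[i] P)))
      = birkhoff f n P / n := by
  rw [integral_smul_measure, integral_finset_sum_measure]
  · simp only [integral_dirac]
    rw [ENNReal.toReal_inv, ENNReal.toReal_natCast, smul_eq_mul]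
    rw [birkhoff]
    ring
  · intro i _
    exact integrable_of_cont_bound hfc hB _

lemma cyl_open (x : X d) (k : ℕ) : IsOpen {y : X d | ∀ i, i < k → y i = x i} := by
  have : {y : X d | ∀ i, i < k → y i = x i}
      = ⋂ i ∈ Finset.range k, (fun y : X d => y i) ⁻¹' {x i} := by
    ext y
    simp [Finset.mem_range]
  rw [this]
  apply isOpen_biInter_finset
  intro i _
  exact (continuous_apply i).isOpen_preimage _ (isOpen_discrete _)

lemma cyl_measurable (x : X d) (k : ℕ) :
    MeasurableSet {y : X d | ∀ i, i < k → y i = x i} :=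
  (cyl_open x k).measurableSet

lemma continuous_of_close {g : X d → ℝ} {A θ : ℝ} (hθ0 : 0 < θ) (hθ1 : θ < 1) (hA : 0 ≤ A)
    (h : ∀ (k : ℕ) (y y' : X d), (∀ i, i < k → y i = y' i) → |g y - g y'| ≤ A * θ ^ k) :
    Continuous g := by
  rw [continuous_iff_continuousAt]
  intro y
  rw [ContinuousAt, Metric.tendsto_nhds]
  intro ε hε
  obtain ⟨k, hk⟩ : ∃ k : ℕ, A * θ ^ k < ε := by
    obtain ⟨k, hk⟩ := exists_pow_lt_of_lt_one (show (0:ℝ) < ε / (A + 1) by positivity) hθ1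
    refine ⟨k, ?_⟩
    have h1 : A * θ ^ k ≤ (A + 1) * θ ^ k := by nlinarith [pow_pos hθ0 k]
    have h2 : (A + 1) * θ ^ k < (A + 1) * (ε / (A + 1)) := by
      apply mul_lt_mul_of_pos_left hk (by linarith)
    have h3 : (A + 1) * (ε / (A + 1)) = ε := by field_simp
    linarith
  have hmem : {y' : X d | ∀ i, i < k → y' i = y i} ∈ 𝓝 y :=
    (cyl_open y k).mem_nhds (fun i _ => rfl)
  filter_upwards [hmem] with y' hy'
  rw [Real.dist_eq]
  calc |g y' - g y| ≤ A * θ ^ k := h k y' y hy'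
    _ < ε := hk

lemma integral_le_bound {g : X d → ℝ} (hg : Continuous g) {B : ℝ} (hB : ∀ z, |g z| ≤ B)
    (μ : Measure (X d)) [IsProbabilityMeasure μ] : ∫ z, g z ∂μ ≤ B := by
  calc ∫ z, g z ∂μ ≤ ∫ _, B ∂μ := by
        apply integral_mono (integrable_of_cont_bound hg hB μ) (integrable_const B)
        intro z
        exact (abs_le.mp (hB z)).2
    _ = B := by simp

lemma lip_bound {θ C : ℝ} (hθ0 : 0 < θ) (hθ1 : θ < 1) {f : X d → ℝ}
    (hf : LipWrt θ C f) (hC : 0 ≤ C) (hd : 0 < d) :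
    ∀ z, |f z| ≤ |f (fun _ => (⟨0, hd⟩ : Fin d))| + C := by
  intro z
  set p : X d := fun _ => (⟨0, hd⟩ : Fin d)
  have h1 : |f z - f p| ≤ C * dtheta θ z p := hf z p
  have h2 : dtheta θ z p ≤ 1 := by
    have := dtheta_le_pow (x := z) (y := p) hθ0 (le_of_lt hθ1) (k := 0) (fun i hi => by omega)
    simpa using this
  have h3 : C * dtheta θ z p ≤ C := by
    calc C * dtheta θ z p ≤ C * 1 := mul_le_mul_of_nonneg_left h2 hC
      _ = C := mul_one C
  calc |f z| = |f p + (f z - f p)| := by ring_nf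
    _ ≤ |f p| + |f z - f p| := abs_add_le _ _
    _ ≤ |f p| + C := by linarith

lemma lip_continuous {θ C : ℝ} (hθ0 : 0 < θ) (hθ1 : θ < 1) {f : X d → ℝ}
    (hf : LipWrt θ C f) (hC : 0 ≤ C) : Continuous f := by
  apply continuous_of_close hθ0 hθ1 hC
  intro k y y' h
  calc |f y - f y'| ≤ C * dtheta θ y y' := hf y y'
    _ ≤ C * θ ^ k := mul_le_mul_of_nonneg_left (dtheta_le_pow hθ0 (le_of_lt hθ1) h) hC

lemma integral_le_beta {θ C : ℝ} (hθ0 : 0 < θ) (hθ1 : θ < 1) {f : X d → ℝ}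
    (hf : LipWrt θ C f) (hC : 0 ≤ C) (hd : 0 < d)
    (ν : Measure (X d)) (hν : IsProbabilityMeasure ν) (hinvν : ν.map shift = ν) :
    (∫ y, f y ∂ν) ≤ beta f := by
  set B := |f (fun _ => (⟨0, hd⟩ : Fin d))| + C with hB
  have hbdd : BddAbove {r : ℝ | ∃ μ : Measure (X d),
      IsProbabilityMeasure μ ∧ μ.map shift = μ ∧ r = ∫ x, f x ∂μ} := by
    refine ⟨B, ?_⟩
    rintro r ⟨μ, hμp, _, rfl⟩
    exact integral_le_bound (lip_continuous hθ0 hθ1 hf hC) (lip_bound hθ0 hθ1 hf hC hd) μ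
  exact le_csSup hbdd ⟨ν, hν, hinvν, rfl⟩

lemma birkhoff_le_beta {θ C : ℝ} (hθ0 : 0 < θ) (hθ1 : θ < 1) {f : X d → ℝ}
    (hf : LipWrt θ C f) (hC : 0 ≤ C) (hd : 0 < d) (x : X d) (n : ℕ) :
    birkhoff f n x ≤ n * beta f + C * (θ / (1 - θ)) := by
  rcases Nat.eq_zero_or_pos n with hn | hn
  · subst hn
    simp [birkhoff]
    exact mul_nonneg hC (div_nonneg (le_of_lt hθ0) (by linarith))
  · set P : X d := fun i => x (i % n) with hPdef
    have hP : shift^[n] P = P := by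
      funext i
      rw [shift_iter_apply]
      show x ((n + i) % n) = x (i % n)
      rw [Nat.add_mod_left]
    have hagree : ∀ i, i < n + 0 → x i = P i := by
      intro i hi
      show x i = x (i % n)
      rw [Nat.mod_eq_of_lt (by omega)]
    have hclose := birkhoff_close hθ0 hθ1 hf hC hagree
    rw [pow_zero, mul_one] at hclose
    have horb : birkhoff f n P / n ≤ beta f := by
      haveI := orbit_isProb (P := P) hn
      rw [← orbit_integral (lip_continuous hθ0 hθ1 hf hC) (lip_bound hθ0 hθ1 hf hC hd) hn]
      exact integral_le_beta hθ0 hθ1 hf hC hd _ (orbit_isProb hn) (orbit_inv hn hP)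
    have hnn : (0:ℝ) < n := by exact_mod_cast hn
    have h1 : birkhoff f n P ≤ n * beta f := by
      rw [div_le_iff₀ hnn] at horb
      linarith [horb]
    have h2 : birkhoff f n x - birkhoff f n P ≤ C * (θ / (1 - θ)) := by
      have := abs_le.mp hclose
      linarith [this.2]
    linarith

def uSet {d : ℕ} (f : X d → ℝ) (y : X d) : Set ℝ :=
  {r : ℝ | ∃ (n : ℕ) (z : X d), shift^[n] z = y ∧ r = birkhoff f n z - n * beta f}

def uu {d : ℕ} (f : X d → ℝ) (y : X d) : ℝ := sSup (uSet f y)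

lemma uSet_nonempty (f : X d → ℝ) (y : X d) : (uSet f y).Nonempty := by
  refine ⟨0, 0, y, rfl, ?_⟩
  simp [birkhoff]

variable {θ C : ℝ} {f : X d → ℝ}

lemma uSet_bdd (hθ0 : 0 < θ) (hθ1 : θ < 1) (hf : LipWrt θ C f) (hC : 0 ≤ C) (hd : 0 < d)
    (y : X d) : ∀ r ∈ uSet f y, r ≤ C * (θ / (1 - θ)) := by
  rintro r ⟨n, z, hz, rfl⟩
  have := birkhoff_le_beta hθ0 hθ1 hf hC hd z n
  linarith

lemma uu_nonneg (hθ0 : 0 < θ) (hθ1 : θ < 1) (hf : LipWrt θ C f) (hC : 0 ≤ C) (hd : 0 < d)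
    (y : X d) : 0 ≤ uu f y := by
  apply le_csSup ⟨C * (θ / (1 - θ)), uSet_bdd hθ0 hθ1 hf hC hd y⟩
  refine ⟨0, y, rfl, by simp [birkhoff]⟩

lemma uu_le (hθ0 : 0 < θ) (hθ1 : θ < 1) (hf : LipWrt θ C f) (hC : 0 ≤ C) (hd : 0 < d)
    (y : X d) : uu f y ≤ C * (θ / (1 - θ)) :=
  csSup_le (uSet_nonempty f y) (uSet_bdd hθ0 hθ1 hf hC hd y)

lemma uu_subaction (hθ0 : 0 < θ) (hθ1 : θ < 1) (hf : LipWrt θ C f) (hC : 0 ≤ C) (hd : 0 < d)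
    (y : X d) : f y + uu f y ≤ beta f + uu f (shift y) := by
  have h : uu f y ≤ beta f + uu f (shift y) - f y := by
    apply csSup_le (uSet_nonempty f y)
    rintro r ⟨n, z, hz, rfl⟩
    have hmem : birkhoff f (n + 1) z - (n + 1 : ℕ) * beta f ∈ uSet f (shift y) := by
      refine ⟨n + 1, z, ?_, rfl⟩
      rw [Function.iterate_succ_apply', hz]
    have hle : birkhoff f (n + 1) z - (n + 1 : ℕ) * beta f ≤ uu f (shift y) :=
      le_csSup ⟨C * (θ / (1 - θ)), uSet_bdd hθ0 hθ1 hf hC hd (shift y)⟩ hmem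
    have hbk : birkhoff f (n + 1) z = birkhoff f n z + f y := by
      rw [birkhoff, birkhoff, Finset.sum_range_succ, hz]
    push_cast at hle
    rw [hbk] at hle
    linarith
  linarith

lemma uu_close (hθ0 : 0 < θ) (hθ1 : θ < 1) (hf : LipWrt θ C f) (hC : 0 ≤ C) (hd : 0 < d)
    {k : ℕ} {y y' : X d} (h : ∀ i, i < k → y i = y' i) :
    uu f y ≤ uu f y' + C * (θ / (1 - θ)) * θ ^ k := by
  apply csSup_le (uSet_nonempty f y)
  rintro r ⟨n, z, hz, rfl⟩
  classical
  set z' : X d := fun j => if hj : j < n then z j else y' (j - n) with hz'def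
  have hz' : shift^[n] z' = y' := by
    funext t
    rw [shift_iter_apply]
    show (if hj : n + t < n then z (n + t) else y' (n + t - n)) = y' t
    rw [dif_neg (by omega)]
    congr 1
    omega
  have hagree : ∀ j, j < n + k → z j = z' j := by
    intro j hj
    by_cases hjn : j < n
    · show z j = if hj : j < n then z j else y' (j - n)
      rw [dif_pos hjn]
    · show z j = if hj : j < n then z j else y' (j - n)
      rw [dif_neg hjn]
      have h1 : z j = y (j - n) := by
        have := congrFun hz (j - n)
        rw [shift_iter_apply] at this
        rw [← this]
        congr 1
        omega
      rw [h1]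
      exact h (j - n) (by omega)
  have hclose := birkhoff_close hθ0 hθ1 hf hC hagree
  have hmem : birkhoff f n z' - n * beta f ∈ uSet f y' := ⟨n, z', hz', rfl⟩
  have hle : birkhoff f n z' - n * beta f ≤ uu f y' :=
    le_csSup ⟨C * (θ / (1 - θ)), uSet_bdd hθ0 hθ1 hf hC hd y'⟩ hmem
  have := abs_le.mp hclose
  linarith [this.2]

lemma uu_continuous (hθ0 : 0 < θ) (hθ1 : θ < 1) (hf : LipWrt θ C f) (hC : 0 ≤ C) (hd : 0 < d) :
    Continuous (uu f) := by
  apply continuous_of_close (A := C * (θ / (1 - θ))) hθ0 hθ1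
    (mul_nonneg hC (div_nonneg (le_of_lt hθ0) (by linarith)))
  intro k y y' h
  have h1 := uu_close hθ0 hθ1 hf hC hd h
  have h2 := uu_close hθ0 hθ1 hf hC hd (fun i hi => (h i hi).symm)
  rw [abs_le]
  constructor <;> nlinarith [pow_pos hθ0 k, mul_nonneg hC (div_nonneg (le_of_lt hθ0) (show (0:ℝ) ≤ 1 - θ by linarith))]

lemma birkhoff_add (f : X d → ℝ) (a b : ℕ) (x : X d) :
    birkhoff f (a + b) x = birkhoff f a x + birkhoff f b (shift^[a] x) := by
  induction b with
  | zero => simp [birkhoff]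
  | succ b ih =>
    have h1 : a + (b + 1) = (a + b) + 1 := by omega
    rw [h1, birkhoff, Finset.sum_range_succ, ← birkhoff, ih]
    have h2 : birkhoff f (b + 1) (shift^[a] x)
        = birkhoff f b (shift^[a] x) + f (shift^[b] (shift^[a] x)) := by
      rw [birkhoff, Finset.sum_range_succ, ← birkhoff]
    rw [h2, ← Function.iterate_add_apply]
    have h3 : b + a = a + b := Nat.add_comm b a
    rw [h3]
    ring

lemma birkhoff_le_sub (hθ0 : 0 < θ) (hθ1 : θ < 1) (hf : LipWrt θ C f) (hC : 0 ≤ C) (hd : 0 < d)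
    (m : ℕ) (y : X d) :
    birkhoff f m y ≤ m * beta f + uu f (shift^[m] y) - uu f y := by
  induction m with
  | zero => simp [birkhoff]
  | succ m ih =>
    have hsub := uu_subaction hθ0 hθ1 hf hC hd (shift^[m] y)
    rw [birkhoff, Finset.sum_range_succ, ← birkhoff]
    rw [Function.iterate_succ_apply']
    push_cast
    push_cast at ih
    linarith

lemma map_iter {μ : Measure (X d)} (hinv : μ.map shift = μ) (i : ℕ) :
    μ.map (shift^[i]) = μ := by
  induction i with
  | zero => simp
  | succ i ih =>
    rw [Function.iterate_succ, ← Measure.map_map (shift_measurable.iterate i) shift_measurable,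
      hinv, ih]

lemma integral_comp_iter {μ : Measure (X d)} (hinv : μ.map shift = μ) (i : ℕ)
    {g : X d → ℝ} (hg : Continuous g) :
    (∫ z, g (shift^[i] z) ∂μ) = ∫ z, g z ∂μ := by
  conv_rhs => rw [← map_iter hinv i]
  rw [integral_map (shift_measurable.iterate i).aemeasurable hg.aestronglyMeasurable]

lemma birkhoff_periodic (f : X d → ℝ) {x : X d} {p : ℕ} (hpx : shift^[p] x = x) (N : ℕ) :
    birkhoff f (N * p) x = N * birkhoff f p x := by
  induction N with
  | zero => simp [birkhoff]
  | succ N ih =>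
    have h1 : (N + 1) * p = N * p + p := by ring
    have h2 : shift^[N * p] x = x := by
      rw [Nat.mul_comm, Function.iterate_mul]
      exact Function.iterate_fixed hpx N
    rw [h1, birkhoff_add, ih, h2]
    push_cast
    ring

end aux

theorem stmt11 (d : ℕ) (hd : 0 < d) (θ C : ℝ) (hθ0 : 0 < θ) (hθ1 : θ < 1)
    (f : X d → ℝ) (hf : LipWrt θ C f)
    (μinf : Measure (X d)) (hprob : IsProbabilityMeasure μinf)
    (hinv : μinf.map shift = μinf) (hmax : (∫ y, f y ∂μinf) = beta f)
    (huniq : ∀ ν : Measure (X d), IsProbabilityMeasure ν → ν.map shift = ν →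
      (∫ y, f y ∂ν) = beta f → ν = μinf) :
    (∃ x : X d, IsPeriodic x ∧ μinf = orbitMeasure x) ∨
    (∀ x : X d, IsPeriodic x → ∃ U : Set (X d), IsOpen U ∧ x ∈ U ∧ μinf U = 0) := by
  classical
  by_cases hright : ∀ x : X d, IsPeriodic x → ∃ U : Set (X d), IsOpen U ∧ x ∈ U ∧ μinf U = 0
  · exact Or.inr hright
  push_neg at hright
  obtain ⟨x, hxper, hx⟩ := hright
  left
  refine ⟨x, hxper, ?_⟩
  -- normalize Lipschitz constant
  set C' := max C 0 with hC'def
  have hC' : (0:ℝ) ≤ C' := le_max_right _ _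
  have hf' : LipWrt θ C' f := fun a b =>
    le_trans (hf a b) (mul_le_mul_of_nonneg_right (le_max_left _ _)
      (dtheta_nonneg (le_of_lt hθ0) a b))
  set K := C' * (θ / (1 - θ)) with hKdef
  have hK : (0:ℝ) ≤ K := mul_nonneg hC' (div_nonneg (le_of_lt hθ0) (by linarith))
  have hfc : Continuous f := lip_continuous hθ0 hθ1 hf' hC'
  set B := |f (fun _ => (⟨0, hd⟩ : Fin d))| + C' with hBdef
  have hB : ∀ z, |f z| ≤ B := lip_bound hθ0 hθ1 hf' hC' hd
  have huc : Continuous (uu f) := uu_continuous hθ0 hθ1 hf' hC' hd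
  have hu0 : ∀ y, 0 ≤ uu f y := uu_nonneg hθ0 hθ1 hf' hC' hd
  have huK : ∀ y, uu f y ≤ K := uu_le hθ0 hθ1 hf' hC' hd
  -- periodic point data
  obtain ⟨n0, hn0, hfix0⟩ := hxper
  have hfix0' : Function.IsPeriodicPt shift n0 x := hfix0
  have hppos : 0 < minPer x := hfix0'.minimalPeriod_pos hn0
  set p := minPer x with hpdef
  have hpx : shift^[p] x = x := Function.isPeriodicPt_minimalPeriod shift x
  have horb_eq : orbitMeasure x
      = (p : ℝ≥0∞)⁻¹ • ∑ i ∈ Finset.range p, Measure.dirac (shift^[i] x) := rfl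
  have horbprob : IsProbabilityMeasure (orbitMeasure x) := by
    rw [horb_eq]; exact orbit_isProb hppos
  have horbinv : (orbitMeasure x).map shift = orbitMeasure x := by
    rw [horb_eq]; exact orbit_inv hppos hpx
  have horbint : (∫ y, f y ∂(orbitMeasure x)) = birkhoff f p x / p := by
    rw [horb_eq]; exact orbit_integral hfc hB hppos
  have hle : birkhoff f p x ≤ p * beta f := by
    have h1 : birkhoff f p x / p ≤ beta f := by
      rw [← horbint]
      exact integral_le_beta hθ0 hθ1 hf' hC' hd _ horbprob horbinv
    have hpp : (0:ℝ) < p := by exact_mod_cast hppos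
    rw [div_le_iff₀ hpp] at h1
    linarith
  rcases eq_or_lt_of_le hle with heq | hlt
  · -- orbit measure is maximizing
    have hint : (∫ y, f y ∂(orbitMeasure x)) = beta f := by
      rw [horbint, heq]
      have hpp : (p:ℝ) ≠ 0 := by exact_mod_cast hppos.ne'
      field_simp
    exact (huniq (orbitMeasure x) horbprob horbinv hint).symm
  · -- contradiction with x in support
    exfalso
    set δ := (p:ℝ) * beta f - birkhoff f p x with hδdef
    have hδ : 0 < δ := by simp only [hδdef]; linarith
    set N := ⌈(2 * K + 1) / δ⌉₊ with hNdef
    have hNδ : 2 * K + 1 ≤ N * δ := by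
      have h1 : (2 * K + 1) / δ ≤ (N:ℝ) := Nat.le_ceil _
      rw [div_le_iff₀ hδ] at h1
      linarith
    set m := N * p with hmdef
    set Cyl := {y : X d | ∀ i, i < m → y i = x i} with hCyldef
    have hxCyl : x ∈ Cyl := fun i _ => rfl
    have hCylne : μinf Cyl ≠ 0 := hx Cyl (cyl_open x m) hxCyl
    -- the nonnegative function G
    set G : X d → ℝ := fun y => m * beta f + uu f (shift^[m] y) - uu f y - birkhoff f m y
      with hGdef
    have hG0 : ∀ y, 0 ≤ G y := by
      intro y
      have := birkhoff_le_sub hθ0 hθ1 hf' hC' hd m y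
      simp only [hGdef]
      linarith
    -- integrability
    have hucomp : Continuous fun y => uu f (shift^[m] y) := huc.comp (shift_continuous.iterate m)
    have huint : Integrable (uu f) μinf :=
      integrable_of_cont_bound huc (B := K) (fun z => abs_le.mpr ⟨by linarith [hu0 z], huK z⟩) μinf
    have hucompint : Integrable (fun y => uu f (shift^[m] y)) μinf :=
      integrable_of_cont_bound hucomp (B := K)
        (fun z => abs_le.mpr ⟨by linarith [hu0 (shift^[m] z)], huK _⟩) μinf
    have hbkint : Integrable (birkhoff f m) μinf := by
      have : birkhoff f m = fun y => ∑ i ∈ Finset.range m, f (shift^[i] y) := rfl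
      rw [this]
      apply integrable_finset_sum
      intro i _
      exact integrable_of_cont_bound (hfc.comp (shift_continuous.iterate i)) (B := B)
        (fun z => hB _) μinf
    have hGint : Integrable G μinf := by
      apply Integrable.sub (Integrable.sub (Integrable.add (integrable_const _) hucompint) huint)
        hbkint
    -- ∫ G = 0
    have hGzero : (∫ y, G y ∂μinf) = 0 := by
      have hA2 : Integrable (fun y => (m:ℝ) * beta f + uu f (shift^[m] y)) μinf :=
        (integrable_const _).add hucompint
      have hA : Integrable (fun y => (m:ℝ) * beta f + uu f (shift^[m] y) - uu f y) μinf :=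
        hA2.sub huint
      have e1 : (∫ y, G y ∂μinf)
          = (∫ y, ((m:ℝ) * beta f + uu f (shift^[m] y) - uu f y) ∂μinf)
            - ∫ y, birkhoff f m y ∂μinf := integral_sub hA hbkint
      have e2 : (∫ y, ((m:ℝ) * beta f + uu f (shift^[m] y) - uu f y) ∂μinf)
          = (∫ y, ((m:ℝ) * beta f + uu f (shift^[m] y)) ∂μinf) - ∫ y, uu f y ∂μinf :=
        integral_sub hA2 huint
      have e2b : (∫ y, ((m:ℝ) * beta f + uu f (shift^[m] y)) ∂μinf)
          = (∫ _, (m:ℝ) * beta f ∂μinf) + ∫ y, uu f (shift^[m] y) ∂μinf :=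
        integral_add (integrable_const _) hucompint
      have e2c : (∫ _, (m:ℝ) * beta f ∂μinf) = m * beta f := by simp
      have e3 : (∫ y, uu f (shift^[m] y) ∂μinf) = ∫ y, uu f y ∂μinf :=
        integral_comp_iter hinv m huc
      have e4 : (∫ y, birkhoff f m y ∂μinf) = m * beta f := by
        have e4a : (∫ y, birkhoff f m y ∂μinf)
            = ∑ i ∈ Finset.range m, ∫ y, f (shift^[i] y) ∂μinf := by
          rw [← integral_finset_sum]
          · rfl
          · intro i _
            exact integrable_of_cont_bound (hfc.comp (shift_continuous.iterate i)) (B := B)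
              (fun z => hB _) μinf
        rw [e4a]
        have e4b : ∀ i ∈ Finset.range m, (∫ y, f (shift^[i] y) ∂μinf) = beta f := by
          intro i _
          rw [integral_comp_iter hinv i hfc, hmax]
        rw [Finset.sum_congr rfl e4b, Finset.sum_const, Finset.card_range, nsmul_eq_mul]
      rw [e1, e2, e2b, e2c, e3, e4]
      ring
    -- lower bound on the cylinder
    set c := N * δ - 2 * K with hcdef
    have hc : (1:ℝ) ≤ c := by simp only [hcdef]; linarith
    have hGc : ∀ y ∈ Cyl, c ≤ G y := by
      intro y hy
      have hagree : ∀ i, i < m + 0 → y i = x i := fun i hi => hy i (by omega)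
      have hclose := birkhoff_close hθ0 hθ1 hf' hC' hagree
      rw [pow_zero, mul_one] at hclose
      have hper : birkhoff f m x = N * birkhoff f p x := birkhoff_periodic f hpx N
      have h1 : birkhoff f m y ≤ N * birkhoff f p x + K := by
        have := (abs_le.mp hclose).2
        linarith
      have h2 : (m:ℝ) = (N:ℝ) * p := by rw [hmdef]; push_cast; ring
      simp only [hGdef, hcdef, hδdef]
      have h3 := hu0 (shift^[m] y)
      have h4 := huK y
      have h5 : (N:ℝ) * ((p:ℝ) * beta f - birkhoff f p x) = (N:ℝ) * (p:ℝ) * beta f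
          - (N:ℝ) * birkhoff f p x := by ring
      rw [h5, h2]
      nlinarith [h1, h3, h4]
    -- conclude μinf Cyl = 0
    have hμfin : μinf Cyl ≠ ⊤ := measure_ne_top μinf Cyl
    have hlow : c * (μinf Cyl).toReal ≤ ∫ y in Cyl, G y ∂μinf :=
      by simpa [measureReal_def, smul_eq_mul, mul_comm] using
        setIntegral_ge_of_const_le (cyl_measurable x m) hμfin hGc hGint.integrableOn
    have hup : (∫ y in Cyl, G y ∂μinf) ≤ ∫ y, G y ∂μinf :=
      setIntegral_le_integral hGint (Filter.Eventually.of_forall hG0)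
    have htoReal : (μinf Cyl).toReal = 0 := by
      nlinarith [ENNReal.toReal_nonneg (a := μinf Cyl)]
    rw [ENNReal.toReal_eq_zero_iff] at htoReal
    rcases htoReal with h | h
    · exact hCylne h
    · exact hμfin h
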